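/- Let n ∈ ℕ and let W = {w_1, …, w_n}, M = {m_1, …, m_n}, W' = {w'_1, …, w'_n}, M' = {m'_1, …, m'_n} be pairwise disjoint sets. Given a profile P_W of partial preference lists for W over M and a profile P_M for M over W, define full preference lists on W ∪ W' over M ∪ M' as follows: the list of w_i is her list in P_W (in the same order), followed by m'_i, followed by all remaining men sorted by index; the list of w'_i is m_i followed by all remaining men sorted by index; and symmetrically for the men (the list of m_j is his list in P_M, then w'_j, then all remaining women; the list of m'_j is w_j, then all remaining women). Then for every marriage μ between W and M, the following are equivalent: (i) μ is stable with respect to P_W and P_M; (ii) μ is a submarriage of some perfect marriage between W ∪ W' and M ∪ M' that is stable with respect to the constructed full preference lists. -/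

import Mathlib

/-- `listPref l a b`: in the (possibly partial) preference list `l`
(most-preferred first), `a` is preferred over `b`: `a` is on the list, and
either `b` is not on the list or `a` precedes `b` on it. -/
def listPref {α : Type} [DecidableEq α] (l : List α) (a b : α) : Prop :=
  a ∈ l ∧ (b ∈ l → l.idxOf a < l.idxOf b)

/-- A marriage between (a subset of) the women `Fin nw` and (a subset of) the
men `Fin nm`: `μ i = some j` means woman `i` is married to man `j`, and
`μ i = none` means woman `i` is single; no two women share a husband. -/
def IsMarriage {nw nm : ℕ} (μ : Fin nw → Option (Fin nm)) : Prop :=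
  ∀ i i' j, μ i = some j → μ i' = some j → i = i'

/-- Stability of a marriage `μ` with respect to (possibly partial) preference
lists `wL` (women's lists of men) and `mL` (men's lists of women): every married
participant is married to someone on their own list, and there is no blocking
pair, i.e. no pair `(i, j)`, with `j` on `i`'s list and `i` on `j`'s list, such
that woman `i` is single or prefers `j` over her spouse, and man `j` is single
or prefers `i` over his spouse. -/
def StableL {nw nm : ℕ} (wL : Fin nw → List (Fin nm)) (mL : Fin nm → List (Fin nw))
    (μ : Fin nw → Option (Fin nm)) : Prop :=
  (∀ i j, μ i = some j → j ∈ wL i ∧ i ∈ mL j) ∧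
  ¬∃ (i : Fin nw) (j : Fin nm),
      j ∈ wL i ∧ i ∈ mL j ∧
      (∀ j', μ i = some j' → listPref (wL i) j j') ∧
      (∀ i', μ i' = some j → listPref (mL j) i i')

/-- Append to the list `l` all the remaining elements of `Fin N`, sorted by index. -/
def completeL {N : ℕ} (l : List (Fin N)) : List (Fin N) :=
  l ++ (List.finRange N).filter (fun a => !(l.contains a))

/-- Extension of a profile `L` of partial preference lists on `Fin n` to a profile
of full preference lists on `Fin (n + n)`.  On each side, participant `i < n` is
an original participant (`w_{i+1}` resp. `m_{j+1}`) and participant `n + i` is a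
primed participant (`w'_{i+1}` resp. `m'_{j+1}`).  The full list of `w_i` is her
original list (in the same order), then `m'_i`, then all remaining men sorted by
index; the full list of `w'_i` is `m_i` followed by all remaining men sorted by
index.  The men's lists are extended by the same construction. -/
def extL (n : ℕ) (L : Fin n → List (Fin n)) : Fin (n + n) → List (Fin (n + n)) :=
  fun i =>
    if h : i.val < n then
      completeL (((L ⟨i.val, h⟩).map (Fin.castAdd n)) ++ [Fin.natAdd n ⟨i.val, h⟩])
    else
      completeL [Fin.castAdd n ⟨i.val - n, by have := i.isLt; omega⟩]

namespace StableAux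
open List

variable {N : ℕ}

lemma mem_completeL (l : List (Fin N)) (a : Fin N) : a ∈ completeL l := by
  unfold completeL
  by_cases h : a ∈ l
  · exact mem_append_left _ h
  · exact mem_append_right _ (by simp [List.mem_filter, h])

lemma completeL_idxOf_of_mem {l : List (Fin N)} {a : Fin N} (h : a ∈ l) :
    (completeL l).idxOf a = l.idxOf a :=
  List.idxOf_append_of_mem h

lemma completeL_idxOf_of_not_mem {l : List (Fin N)} {a : Fin N} (h : a ∉ l) :
    l.length ≤ (completeL l).idxOf a := by
  unfold completeL
  rw [List.idxOf_append_of_notMem h]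
  omega

lemma sorted_idxOf_lt {l : List (Fin N)} (hs : l.Pairwise (· < ·)) {a b : Fin N}
    (ha : a ∈ l) (h : a < b) : l.idxOf a < l.idxOf b := by
  induction l with
  | nil => cases ha
  | cons c t ih =>
    rcases List.pairwise_cons.1 hs with ⟨hc, ht⟩
    by_cases hca : c = a
    · subst hca
      have hcb : c ≠ b := fun e => absurd h (by simp [e])
      rw [List.idxOf_cons_self, List.idxOf_cons_ne _ hcb]
      exact Nat.succ_pos _
    · have hat : a ∈ t := (List.mem_cons.1 ha).resolve_left (fun e => hca e.symm)
      have hcb : c ≠ b := by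
        intro e
        have := hc a hat
        rw [e] at this
        exact absurd (this.trans h) (lt_irrefl _)
      rw [List.idxOf_cons_ne _ hca, List.idxOf_cons_ne _ hcb]
      exact Nat.succ_lt_succ (ih ht hat)

lemma completeL_tail_lt {l : List (Fin N)} {a b : Fin N} (ha : a ∉ l) (hb : b ∉ l)
    (h : a < b) : (completeL l).idxOf a < (completeL l).idxOf b := by
  unfold completeL
  rw [List.idxOf_append_of_notMem ha, List.idxOf_append_of_notMem hb]
  have hs : ((List.finRange N).filter (fun x => !(l.contains x))).Pairwise (· < ·) :=
    (List.pairwise_lt_finRange N).filter _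
  have ham : a ∈ (List.finRange N).filter (fun x => !(l.contains x)) := by
    simp [List.mem_filter, ha]
  exact Nat.add_lt_add_left (sorted_idxOf_lt hs ham h) _

lemma lt_of_completeL_tail_lt {l : List (Fin N)} {a b : Fin N} (ha : a ∉ l) (hb : b ∉ l)
    (h : (completeL l).idxOf a < (completeL l).idxOf b) : a < b := by
  rcases lt_trichotomy a b with h' | h' | h'
  · exact h'
  · subst h'; exact absurd h (lt_irrefl _)
  · exact absurd h (not_lt.2 (le_of_lt (completeL_tail_lt hb ha h')))

lemma idxOf_map {α β : Type*} [DecidableEq α] [DecidableEq β] {f : α → β}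
    (hf : Function.Injective f) (l : List α) (a : α) :
    (l.map f).idxOf (f a) = l.idxOf a := by
  induction l with
  | nil => rfl
  | cons c t ih =>
    by_cases h : c = a
    · subst h; simp
    · rw [List.map_cons, List.idxOf_cons_ne _ (fun e => h (hf e)),
        List.idxOf_cons_ne _ h, ih]

end StableAux

namespace StableAux
open List

variable {n : ℕ}

lemma castAdd_ne_natAdd (i k : Fin n) : (Fin.castAdd n i : Fin (n + n)) ≠ Fin.natAdd n k := by
  intro h
  have := congrArg Fin.val h
  simp only [Fin.coe_castAdd, Fin.coe_natAdd] at this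
  omega

lemma natAdd_injective : Function.Injective (Fin.natAdd n : Fin n → Fin (n + n)) := by
  intro a b h
  have := congrArg Fin.val h
  simp only [Fin.coe_natAdd] at this
  exact Fin.ext (by omega)

lemma extL_castAdd (L : Fin n → List (Fin n)) (i : Fin n) :
    extL n L (Fin.castAdd n i) = completeL ((L i).map (Fin.castAdd n) ++ [Fin.natAdd n i]) := by
  have h : ((Fin.castAdd n i) : Fin (n + n)).val < n := i.isLt
  rw [extL, dif_pos h]
  rfl

lemma extL_natAdd (L : Fin n → List (Fin n)) (k : Fin n) :
    extL n L (Fin.natAdd n k) = completeL [Fin.castAdd n k] := by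
  have h : ¬ ((Fin.natAdd n k) : Fin (n + n)).val < n := by
    simp only [Fin.coe_natAdd]; omega
  rw [extL, dif_neg h]
  congr 2
  exact Fin.ext (by simp)

lemma mem_extL (L : Fin n → List (Fin n)) (x : Fin (n + n)) (a : Fin (n + n)) :
    a ∈ extL n L x := by
  rw [extL]
  split <;> exact mem_completeL _ _

section prefixW

variable {l : List (Fin n)} {i j k : Fin n}

lemma castAdd_mem_pre :
    (Fin.castAdd n j : Fin (n + n)) ∈ (l.map (Fin.castAdd n) ++ [Fin.natAdd n i]) ↔ j ∈ l := by
  constructor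
  · intro h
    rcases List.mem_append.1 h with h | h
    · rcases List.mem_map.1 h with ⟨a, ha, hae⟩
      rwa [← Fin.castAdd_injective n n hae]
    · exact absurd (List.mem_singleton.1 h) (castAdd_ne_natAdd j i)
  · intro h
    exact List.mem_append_left _ (List.mem_map_of_mem h)

lemma idxW_cast_of_mem (hj : j ∈ l) :
    (completeL (l.map (Fin.castAdd n) ++ [Fin.natAdd n i])).idxOf (Fin.castAdd n j)
      = l.idxOf j := by
  rw [completeL_idxOf_of_mem (castAdd_mem_pre.2 hj),
    List.idxOf_append_of_mem (List.mem_map_of_mem hj),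
    idxOf_map (Fin.castAdd_injective n n)]

lemma idxW_cast_lt (hj : j ∈ l) :
    (completeL (l.map (Fin.castAdd n) ++ [Fin.natAdd n i])).idxOf (Fin.castAdd n j)
      < l.length := by
  rw [idxW_cast_of_mem hj]
  exact List.idxOf_lt_length_iff.2 hj

lemma idxW_natAdd_self :
    (completeL (l.map (Fin.castAdd n) ++ [Fin.natAdd n i])).idxOf (Fin.natAdd n i)
      = l.length := by
  have h1 : (Fin.natAdd n i : Fin (n + n)) ∉ l.map (Fin.castAdd n) := by
    simp only [List.mem_map, not_exists]
    intro a
    rintro ⟨_, h⟩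
    exact castAdd_ne_natAdd a i h
  rw [completeL_idxOf_of_mem (List.mem_append_right _ (List.mem_singleton_self _)),
    List.idxOf_append_of_notMem h1, List.idxOf_cons_self, List.length_map]
  rfl

lemma idxW_cast_of_not_mem (hj : j ∉ l) :
    l.length + 1 ≤
      (completeL (l.map (Fin.castAdd n) ++ [Fin.natAdd n i])).idxOf (Fin.castAdd n j) := by
  have := completeL_idxOf_of_not_mem (l := l.map (Fin.castAdd n) ++ [Fin.natAdd n i])
    (a := Fin.castAdd n j) (by rw [castAdd_mem_pre]; exact hj)
  simpa using this

lemma idxW_natAdd_ge (k : Fin n) :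
    l.length ≤
      (completeL (l.map (Fin.castAdd n) ++ [Fin.natAdd n i])).idxOf (Fin.natAdd n k) := by
  by_cases hk : k = i
  · subst hk; rw [idxW_natAdd_self]
  · have hnm : (Fin.natAdd n k : Fin (n + n)) ∉ (l.map (Fin.castAdd n) ++ [Fin.natAdd n i]) := by
      intro hmem
      rcases List.mem_append.1 hmem with h | h
      · rcases List.mem_map.1 h with ⟨a, _, ha⟩
        exact castAdd_ne_natAdd a k ha
      · exact hk (natAdd_injective (List.mem_singleton.1 h))
    have := completeL_idxOf_of_not_mem hnm
    simp only [List.length_append, List.length_map, List.length_singleton] at this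
    omega

end prefixW

section primed

variable {k : Fin n}

lemma idxS_self (k : Fin n) :
    (completeL [(Fin.castAdd n k : Fin (n + n))]).idxOf (Fin.castAdd n k) = 0 := by
  rw [completeL_idxOf_of_mem (List.mem_singleton_self _), List.idxOf_cons_self]

lemma idxS_pos {a : Fin (n + n)} (h : a ≠ Fin.castAdd n k) :
    1 ≤ (completeL [(Fin.castAdd n k : Fin (n + n))]).idxOf a := by
  have := completeL_idxOf_of_not_mem (l := [(Fin.castAdd n k : Fin (n + n))]) (a := a)
    (by simp [h])
  simpa using this

lemma idxS_natAdd_lt_natAdd {b b' : Fin n} (h :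
    (completeL [(Fin.castAdd n k : Fin (n + n))]).idxOf (Fin.natAdd n b)
      < (completeL [(Fin.castAdd n k : Fin (n + n))]).idxOf (Fin.natAdd n b')) :
    b < b' := by
  have hb : (Fin.natAdd n b : Fin (n + n)) ∉ [(Fin.castAdd n k : Fin (n + n))] := by
    intro hmem
    exact castAdd_ne_natAdd k b (List.mem_singleton.1 hmem).symm
  have hb' : (Fin.natAdd n b' : Fin (n + n)) ∉ [(Fin.castAdd n k : Fin (n + n))] := by
    intro hmem
    exact castAdd_ne_natAdd k b' (List.mem_singleton.1 hmem).symm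
  have hlt := lt_of_completeL_tail_lt hb hb' h
  rw [Fin.lt_def] at hlt
  simp only [Fin.coe_natAdd] at hlt
  exact Fin.lt_def.2 (by omega)

end primed

end StableAux


section Main

open StableAux List

/-- A marriage `μ` between `W` and `M` (with possibly-partial preference profiles
`wL`, `mL`, each list duplicate-free) is stable if and only if `μ` is a
submarriage of some perfect marriage `μ''` between `W ∪ W'` and `M ∪ M'` that is
stable with respect to the constructed full preference lists. -/
theorem stable_iff_submarriage_of_stable_full (n : ℕ)
    (wL : Fin n → List (Fin n)) (mL : Fin n → List (Fin n))
    (hw : ∀ i, (wL i).Nodup) (hm : ∀ j, (mL j).Nodup)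
    (μ : Fin n → Option (Fin n)) (hμ : IsMarriage μ) :
    StableL wL mL μ ↔
      ∃ μ'' : Fin (n + n) → Option (Fin (n + n)),
        IsMarriage μ'' ∧ (∀ i, (μ'' i).isSome) ∧ (∀ j, ∃ i, μ'' i = some j) ∧
        StableL (extL n wL) (extL n mL) μ'' ∧
        (∀ i j : Fin n, μ i = some j ↔ μ'' (Fin.castAdd n i) = some (Fin.castAdd n j)) := by
  classical
  constructor
  · -- forward direction
    intro hst
    set A : List (Fin n) := (List.finRange n).filter (fun k => decide (∃ i, μ i = some k))
      with hA
    set B : List (Fin n) := (List.finRange n).filter (fun i => (μ i).isSome) with hB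
    have hmemA : ∀ k, k ∈ A ↔ ∃ i, μ i = some k := by
      intro k; simp [hA, List.mem_filter]
    have hmemB : ∀ i, i ∈ B ↔ (μ i).isSome := by
      intro i; simp [hB, List.mem_filter]
    have hAnd : A.Nodup := (List.nodup_finRange n).filter _
    have hBnd : B.Nodup := (List.nodup_finRange n).filter _
    have hAsort : A.Pairwise (· < ·) := (List.pairwise_lt_finRange n).filter _
    have hBsort : B.Pairwise (· < ·) := (List.pairwise_lt_finRange n).filter _
    have hlen : A.length = B.length := by
      have h1 : A.toFinset = Finset.univ.filter (fun k => ∃ i, μ i = some k) := by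
        ext k; simp [List.mem_toFinset, hmemA k]
      have h2 : B.toFinset = Finset.univ.filter (fun i => (μ i).isSome) := by
        ext i; simp [List.mem_toFinset, hmemB i]
      have hcard : (Finset.univ.filter (fun i : Fin n => (μ i).isSome)).card
          = (Finset.univ.filter (fun k : Fin n => ∃ i, μ i = some k)).card := by
        apply Finset.card_bij (fun i hi => (μ i).get (by simpa using hi))
        · intro a ha
          simp only [Finset.mem_filter, Finset.mem_univ, true_and]
          exact ⟨a, (Option.some_get _).symm⟩
        · intro a ha b hb h
          refine hμ a b ((μ a).get (by simpa using ha)) (Option.some_get _).symm ?_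
          rw [h]
          exact (Option.some_get _).symm
        · intro k hk
          simp only [Finset.mem_filter, Finset.mem_univ, true_and] at hk
          obtain ⟨i, hi⟩ := hk
          refine ⟨i, by simp [hi], ?_⟩
          simp [hi]
      rw [← List.toFinset_card_of_nodup hAnd, ← List.toFinset_card_of_nodup hBnd, h1, h2,
        ← hcard]
    have hidxA : ∀ {k : Fin n}, k ∈ A → A.idxOf k < B.length := by
      intro k hk
      rw [← hlen]
      exact List.idxOf_lt_length_iff.2 hk
    set μ'' : Fin (n + n) → Option (Fin (n + n)) := fun x =>
      Fin.addCases (motive := fun _ => Option (Fin (n + n)))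
        (fun i => some ((μ i).elim (Fin.natAdd n i) (Fin.castAdd n)))
        (fun k => if hk : k ∈ A then some (Fin.natAdd n (B.get ⟨A.idxOf k, hidxA hk⟩))
          else some (Fin.castAdd n k)) x
      with hdef
    have hc : ∀ i : Fin n,
        μ'' (Fin.castAdd n i) = some ((μ i).elim (Fin.natAdd n i) (Fin.castAdd n)) := by
      intro i; simp [hdef]
    have hc1 : ∀ i j, μ i = some j → μ'' (Fin.castAdd n i) = some (Fin.castAdd n j) := by
      intro i j h; rw [hc i, h]; rfl
    have hc2 : ∀ i, μ i = none → μ'' (Fin.castAdd n i) = some (Fin.natAdd n i) := by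
      intro i h; rw [hc i, h]; rfl
    have hn : ∀ k : Fin n, μ'' (Fin.natAdd n k) =
        if hk : k ∈ A then some (Fin.natAdd n (B.get ⟨A.idxOf k, hidxA hk⟩))
        else some (Fin.castAdd n k) := by
      intro k; rw [hdef]; exact Fin.addCases_right k
    have hn1 : ∀ k (hk : k ∈ A),
        μ'' (Fin.natAdd n k) = some (Fin.natAdd n (B.get ⟨A.idxOf k, hidxA hk⟩)) := by
      intro k hk; rw [hn k, dif_pos hk]
    have hn2 : ∀ k, k ∉ A → μ'' (Fin.natAdd n k) = some (Fin.castAdd n k) := by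
      intro k hk; rw [hn k, dif_neg hk]
    have hcases : ∀ x y, μ'' x = some y →
        (∃ i j, x = Fin.castAdd n i ∧ μ i = some j ∧ y = Fin.castAdd n j) ∨
        (∃ i, x = Fin.castAdd n i ∧ μ i = none ∧ y = Fin.natAdd n i) ∨
        (∃ k, ∃ hk : k ∈ A, x = Fin.natAdd n k ∧
          y = Fin.natAdd n (B.get ⟨A.idxOf k, hidxA hk⟩)) ∨
        (∃ k, x = Fin.natAdd n k ∧ k ∉ A ∧ y = Fin.castAdd n k) := by
      intro x
      induction x using Fin.addCases with
      | left i =>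
        intro y hy
        rw [hc i] at hy
        cases hmi : μ i with
        | some j =>
          rw [hmi] at hy
          exact Or.inl ⟨i, j, rfl, hmi, (Option.some_inj.1 hy).symm⟩
        | none =>
          rw [hmi] at hy
          exact Or.inr (Or.inl ⟨i, rfl, hmi, (Option.some_inj.1 hy).symm⟩)
      | right k =>
        intro y hy
        by_cases hk : k ∈ A
        · rw [hn1 k hk] at hy
          exact Or.inr (Or.inr (Or.inl ⟨k, hk, rfl, (Option.some_inj.1 hy).symm⟩))
        · rw [hn2 k hk] at hy
          exact Or.inr (Or.inr (Or.inr ⟨k, rfl, hk, (Option.some_inj.1 hy).symm⟩))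
    have hMar : IsMarriage μ'' := by
      intro x x' y h h'
      rcases hcases x y h with ⟨i, j, rfl, hmi, rfl⟩ | ⟨i, rfl, hmi, rfl⟩ |
        ⟨k, hk, rfl, rfl⟩ | ⟨k, rfl, hk, rfl⟩ <;>
        rcases hcases x' _ h' with ⟨i', j', rfl, hmi', heq⟩ | ⟨i', rfl, hmi', heq⟩ |
          ⟨k', hk', rfl, heq⟩ | ⟨k', rfl, hk', heq⟩
      · rw [Fin.castAdd_inj] at heq
        subst heq
        rw [hμ i i' j hmi hmi']
      · exact absurd heq (castAdd_ne_natAdd _ _)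
      · exact absurd heq (castAdd_ne_natAdd _ _)
      · rw [Fin.castAdd_inj] at heq
        subst heq
        exact absurd ((hmemA j).2 ⟨i, hmi⟩) hk'
      · exact absurd heq.symm (castAdd_ne_natAdd _ _)
      · have he : i = i' := natAdd_injective heq
        subst he
        rfl
      · have hbB : B.get ⟨A.idxOf k', hidxA hk'⟩ ∈ B := List.get_mem _ _
        have hS := (hmemB _).1 hbB
        rw [← natAdd_injective heq, hmi] at hS
        simp at hS
      · exact absurd heq.symm (castAdd_ne_natAdd _ _)
      · exact absurd heq.symm (castAdd_ne_natAdd _ _)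
      · have hbB : B.get ⟨A.idxOf k, hidxA hk⟩ ∈ B := List.get_mem _ _
        have hS := (hmemB _).1 hbB
        rw [natAdd_injective heq, hmi'] at hS
        simp at hS
      · have he := natAdd_injective heq
        have ht : (⟨A.idxOf k, hidxA hk⟩ : Fin B.length) = ⟨A.idxOf k', hidxA hk'⟩ :=
          (hBnd.get_inj_iff).1 he
        have hAk : A.idxOf k = A.idxOf k' := congrArg Fin.val ht
        rw [(List.idxOf_inj hk).1 hAk]
      · exact absurd heq.symm (castAdd_ne_natAdd _ _)
      · rw [Fin.castAdd_inj] at heq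
        subst heq
        exact absurd ((hmemA k).2 ⟨i', hmi'⟩) hk
      · exact absurd heq (castAdd_ne_natAdd _ _)
      · exact absurd heq (castAdd_ne_natAdd _ _)
      · rw [Fin.castAdd_inj] at heq
        subst heq
        rfl
    have hTot : ∀ x, (μ'' x).isSome := by
      intro x
      induction x using Fin.addCases with
      | left i => rw [hc i]; rfl
      | right k => rw [hn k]; split <;> rfl
    have hSurj : ∀ y, ∃ x, μ'' x = some y := by
      intro y
      induction y using Fin.addCases with
      | left j =>
        by_cases hj : ∃ i, μ i = some j
        · obtain ⟨i, hi⟩ := hj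
          exact ⟨_, hc1 i j hi⟩
        · exact ⟨_, hn2 j (fun hk => hj ((hmemA j).1 hk))⟩
      | right b =>
        by_cases hb : (μ b).isSome
        · have hbB : b ∈ B := (hmemB b).2 hb
          have ht : B.idxOf b < A.length := by
            rw [hlen]; exact List.idxOf_lt_length_iff.2 hbB
          have hkA : A.get ⟨B.idxOf b, ht⟩ ∈ A := List.get_mem _ _
          refine ⟨Fin.natAdd n (A.get ⟨B.idxOf b, ht⟩), ?_⟩
          rw [hn1 _ hkA]
          congr 2
          have h1 : A.idxOf (A.get ⟨B.idxOf b, ht⟩) = B.idxOf b :=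
            List.get_idxOf hAnd _
          have : (⟨A.idxOf (A.get ⟨B.idxOf b, ht⟩), hidxA hkA⟩ : Fin B.length)
              = ⟨B.idxOf b, List.idxOf_lt_length_iff.2 hbB⟩ := Fin.ext h1
          rw [this]
          exact List.idxOf_get _
        · exact ⟨_, hc2 b (Option.not_isSome_iff_eq_none.1 hb)⟩
    have hcorr : ∀ i j : Fin n, μ i = some j ↔ μ'' (Fin.castAdd n i) = some (Fin.castAdd n j) := by
      intro i j
      constructor
      · exact hc1 i j
      · intro h
        cases hmi : μ i with
        | some j' =>
          rw [hc1 i j' hmi] at h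
          rw [Fin.castAdd_inj.1 (Option.some_inj.1 h)]
        | none =>
          rw [hc2 i hmi] at h
          exact absurd (Option.some_inj.1 h).symm (castAdd_ne_natAdd _ _)
    refine ⟨μ'', hMar, hTot, hSurj, ⟨?_, ?_⟩, hcorr⟩
    · intro x y hxy
      exact ⟨mem_extL wL x y, mem_extL mL y x⟩
    · rintro ⟨x, y, -, -, Cw, Cm⟩
      revert Cw Cm
      induction x using Fin.addCases with
      | left i =>
        induction y using Fin.addCases with
        | left j =>
          intro Cw Cm
          -- main case: (w_i, m_j) would be a blocking pair for μ
          have hwside : j ∈ wL i ∧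
              ∀ j₀, μ i = some j₀ → (wL i).idxOf j < (wL i).idxOf j₀ := by
            cases hmi : μ i with
            | some j₀ =>
              have hj₀ : j₀ ∈ wL i := (hst.1 i j₀ hmi).1
              have hlt := (Cw _ (hc1 i j₀ hmi)).2 (mem_extL wL _ _)
              rw [extL_castAdd, idxW_cast_of_mem hj₀] at hlt
              have hjin : j ∈ wL i := by
                by_contra hj
                have h2 := idxW_cast_of_not_mem (l := wL i) (i := i) hj
                have h1 := List.idxOf_lt_length_iff.2 hj₀
                omega
              refine ⟨hjin, ?_⟩
              intro j₁ h₁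
              cases h₁
              rwa [idxW_cast_of_mem hjin] at hlt
            | none =>
              have hlt := (Cw _ (hc2 i hmi)).2 (mem_extL wL _ _)
              rw [extL_castAdd, idxW_natAdd_self] at hlt
              have hjin : j ∈ wL i := by
                by_contra hj
                have h2 := idxW_cast_of_not_mem (l := wL i) (i := i) hj
                omega
              refine ⟨hjin, ?_⟩
              intro j₁ h₁
              cases h₁
          have hmside : i ∈ mL j ∧
              ∀ i₀, μ i₀ = some j → (mL j).idxOf i < (mL j).idxOf i₀ := by
            by_cases hjm : ∃ i₀, μ i₀ = some j
            · obtain ⟨i₀, hi₀⟩ := hjm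
              have hi₀m : i₀ ∈ mL j := (hst.1 i₀ j hi₀).2
              have hql := (Cm _ (hc1 i₀ j hi₀)).2 (mem_extL mL _ _)
              rw [extL_castAdd, idxW_cast_of_mem hi₀m] at hql
              have hiin : i ∈ mL j := by
                by_contra hi
                have h2 := idxW_cast_of_not_mem (l := mL j) (i := j) hi
                have h1 := List.idxOf_lt_length_iff.2 hi₀m
                omega
              refine ⟨hiin, ?_⟩
              intro i₁ h₁
              rw [hμ i₁ i₀ j h₁ hi₀]
              rwa [idxW_cast_of_mem hiin] at hql
            · have hjA : j ∉ A := fun h => hjm ((hmemA j).1 h)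
              have hql := (Cm _ (hn2 j hjA)).2 (mem_extL mL _ _)
              rw [extL_castAdd, idxW_natAdd_self] at hql
              have hiin : i ∈ mL j := by
                by_contra hi
                have h2 := idxW_cast_of_not_mem (l := mL j) (i := j) hi
                omega
              exact ⟨hiin, fun i₁ h₁ => absurd ⟨i₁, h₁⟩ hjm⟩
          exact hst.2 ⟨i, j, hwside.1, hmside.1,
            fun j₁ h₁ => ⟨hwside.1, fun _ => hwside.2 j₁ h₁⟩,
            fun i₁ h₁ => ⟨hmside.1, fun _ => hmside.2 i₁ h₁⟩⟩
        | right kb =>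
          intro Cw Cm
          -- (w_i, m'_kb) never blocks: w_i prefers her spouse
          cases hmi : μ i with
          | some j₀ =>
            have hlt := (Cw _ (hc1 i j₀ hmi)).2 (mem_extL wL _ _)
            rw [extL_castAdd] at hlt
            have h1 := idxW_cast_lt (l := wL i) (i := i) ((hst.1 i j₀ hmi).1)
            have h2 := idxW_natAdd_ge (l := wL i) (i := i) kb
            omega
          | none =>
            have hlt := (Cw _ (hc2 i hmi)).2 (mem_extL wL _ _)
            rw [extL_castAdd, idxW_natAdd_self] at hlt
            have h2 := idxW_natAdd_ge (l := wL i) (i := i) kb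
            omega
      | right k =>
        induction y using Fin.addCases with
        | left j =>
          intro Cw Cm
          -- (w'_k, m_j) never blocks: m_j prefers his spouse
          by_cases hjm : ∃ i₀, μ i₀ = some j
          · obtain ⟨i₀, hi₀⟩ := hjm
            have hql := (Cm _ (hc1 i₀ j hi₀)).2 (mem_extL mL _ _)
            rw [extL_castAdd] at hql
            have h1 := idxW_cast_lt (l := mL j) (i := j) ((hst.1 i₀ j hi₀).2)
            have h2 := idxW_natAdd_ge (l := mL j) (i := j) k
            omega
          · have hjA : j ∉ A := fun h => hjm ((hmemA j).1 h)
            have hql := (Cm _ (hn2 j hjA)).2 (mem_extL mL _ _)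
            rw [extL_castAdd, idxW_natAdd_self] at hql
            have h2 := idxW_natAdd_ge (l := mL j) (i := j) k
            omega
        | right b' =>
          intro Cw Cm
          by_cases hk : k ∈ A
          · -- w'_k is married to m'_{B.get (A.idxOf k)}
            have hlt := (Cw _ (hn1 k hk)).2 (mem_extL wL _ _)
            rw [extL_natAdd] at hlt
            have hb'b : b' < B.get ⟨A.idxOf k, hidxA hk⟩ := idxS_natAdd_lt_natAdd hlt
            obtain ⟨x', hx'⟩ := hSurj (Fin.natAdd n b')
            rcases hcases x' _ hx' with ⟨i'', j'', rfl, hmi'', heq⟩ |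
              ⟨i'', rfl, hmi'', heq⟩ | ⟨k', hk', rfl, heq⟩ | ⟨k', rfl, hk', heq⟩
            · exact absurd heq.symm (castAdd_ne_natAdd _ _)
            · -- m'_{b'} is married to w_{b'}, his top choice
              have hb'i : b' = i'' := natAdd_injective heq
              subst hb'i
              have hql := (Cm _ hx').2 (mem_extL mL _ _)
              rw [extL_natAdd, idxS_self] at hql
              exact absurd hql (Nat.not_lt_zero _)
            · -- both primed: contradiction with the assortative matching
              have hql := (Cm _ hx').2 (mem_extL mL _ _)
              rw [extL_natAdd] at hql
              have hkk' : k < k' := idxS_natAdd_lt_natAdd hql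
              have hb'eq : b' = B.get ⟨A.idxOf k', hidxA hk'⟩ := natAdd_injective heq
              have hBlt : B.get ⟨A.idxOf k', hidxA hk'⟩ < B.get ⟨A.idxOf k, hidxA hk⟩ := by
                rw [← hb'eq]; exact hb'b
              have htlt : A.idxOf k' < A.idxOf k := by
                by_contra hle
                push_neg at hle
                rcases lt_or_eq_of_le hle with h' | h'
                · have := List.pairwise_iff_get.1 hBsort
                    ⟨A.idxOf k, hidxA hk⟩ ⟨A.idxOf k', hidxA hk'⟩ h'
                  exact absurd this (not_lt.2 (le_of_lt hBlt))
                · have : (⟨A.idxOf k, hidxA hk⟩ : Fin B.length)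
                      = ⟨A.idxOf k', hidxA hk'⟩ := Fin.ext h'
                  rw [this] at hBlt
                  exact absurd hBlt (lt_irrefl _)
              have hA1 : A.idxOf k < A.length := List.idxOf_lt_length_iff.2 hk
              have hA2 : A.idxOf k' < A.length := List.idxOf_lt_length_iff.2 hk'
              have hAlt : A.get ⟨A.idxOf k', hA2⟩ < A.get ⟨A.idxOf k, hA1⟩ :=
                List.pairwise_iff_get.1 hAsort _ _ htlt
              rw [List.idxOf_get, List.idxOf_get] at hAlt
              exact absurd hAlt (not_lt.2 (le_of_lt hkk'))
            · exact absurd heq (castAdd_ne_natAdd _ _).symm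
          · -- w'_k is married to m_k, her top choice
            have hlt := (Cw _ (hn2 k hk)).2 (mem_extL wL _ _)
            rw [extL_natAdd, idxS_self] at hlt
            exact absurd hlt (Nat.not_lt_zero _)
  · -- backward direction
    rintro ⟨μ'', hM, hTot, hSurj, hSt'', hcorr⟩
    have comp1 : ∀ i j, μ i = some j → j ∈ wL i ∧ i ∈ mL j := by
      intro i j hij
      have ha : μ'' (Fin.castAdd n i) = some (Fin.castAdd n j) := (hcorr i j).1 hij
      constructor
      · by_contra hj
        apply hSt''.2
        refine ⟨Fin.castAdd n i, Fin.natAdd n i, mem_extL wL _ _, mem_extL mL _ _, ?_, ?_⟩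
        · intro y' hy'
          rw [ha] at hy'
          cases hy'
          refine ⟨mem_extL wL _ _, fun _ => ?_⟩
          rw [extL_castAdd, idxW_natAdd_self]
          have := idxW_cast_of_not_mem (l := wL i) (i := i) hj
          omega
        · intro x' hx'
          refine ⟨mem_extL mL _ _, fun _ => ?_⟩
          have hne : x' ≠ Fin.castAdd n i := by
            rintro rfl
            rw [ha] at hx'
            exact absurd (Option.some_inj.1 hx') (castAdd_ne_natAdd _ _)
          rw [extL_natAdd, idxS_self]
          exact idxS_pos hne
      · by_contra hi
        apply hSt''.2
        refine ⟨Fin.natAdd n j, Fin.castAdd n j, mem_extL wL _ _, mem_extL mL _ _, ?_, ?_⟩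
        · intro y' hy'
          refine ⟨mem_extL wL _ _, fun _ => ?_⟩
          have hne : y' ≠ Fin.castAdd n j := by
            rintro rfl
            have := hM (Fin.natAdd n j) (Fin.castAdd n i) (Fin.castAdd n j) hy' ha
            exact castAdd_ne_natAdd i j this.symm
          rw [extL_natAdd, idxS_self]
          exact idxS_pos hne
        · intro x' hx'
          have : x' = Fin.castAdd n i := hM x' (Fin.castAdd n i) _ hx' ha
          subst this
          refine ⟨mem_extL mL _ _, fun _ => ?_⟩
          rw [extL_castAdd, idxW_natAdd_self]
          have := idxW_cast_of_not_mem (l := mL j) (i := j) hi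
          omega
    refine ⟨comp1, ?_⟩
    rintro ⟨i, j, hjw, hiM, Cw, Cm⟩
    apply hSt''.2
    refine ⟨Fin.castAdd n i, Fin.castAdd n j, mem_extL wL _ _, mem_extL mL _ _, ?_, ?_⟩
    · intro y' hy'
      refine ⟨mem_extL wL _ _, fun _ => ?_⟩
      cases hmi : μ i with
      | some j₀ =>
        rw [(hcorr i j₀).1 hmi] at hy'
        cases hy'
        have hj₀ : j₀ ∈ wL i := (comp1 i j₀ hmi).1
        have hpref := Cw j₀ hmi
        rw [extL_castAdd, idxW_cast_of_mem hpref.1, idxW_cast_of_mem hj₀]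
        exact hpref.2 hj₀
      | none =>
        revert hy'
        induction y' using Fin.addCases with
        | left j'' =>
          intro hy'
          have hcontr := (hcorr i j'').2 hy'
          rw [hmi] at hcontr
          cases hcontr
        | right kb =>
          intro _
          rw [extL_castAdd]
          have h1 := idxW_cast_lt (l := wL i) (i := i) hjw
          have h2 := idxW_natAdd_ge (l := wL i) (i := i) kb
          omega
    · intro x' hx'
      refine ⟨mem_extL mL _ _, fun _ => ?_⟩
      revert hx'
      induction x' using Fin.addCases with
      | left i₀ =>
        intro hx'
        have hi₀ : μ i₀ = some j := (hcorr i₀ j).2 hx'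
        have hi₀m : i₀ ∈ mL j := (comp1 i₀ j hi₀).2
        have hpref := Cm i₀ hi₀
        rw [extL_castAdd, idxW_cast_of_mem hpref.1, idxW_cast_of_mem hi₀m]
        exact hpref.2 hi₀m
      | right kb =>
        intro _
        rw [extL_castAdd]
        have h1 := idxW_cast_lt (l := mL j) (i := j) hiM
        have h2 := idxW_natAdd_ge (l := mL j) (i := j) kb
        omega

end Main
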